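/- Let X ⊂ ℂⁿ be a compact set with nonempty interior X°, and let u ∈ PSH(X). Then the restriction of u to X° is a plurisubharmonic function on the open set X° in the classical sense. -/

import Mathlib

open MeasureTheory Metric Set Filter

noncomputable section

/-- The positive part of an extended real number, as an element of `ℝ≥0∞`. -/
def erealPos (x : EReal) : ENNReal := if x = ⊤ then ⊤ else ENNReal.ofReal x.toReal

/-- The integral of an extended-real-valued function `u` against a measure `μ`,
defined as the difference of the (unsigned) lower integrals of the positive and
negative parts of `u`. -/
def erealIntegral {α : Type*} [MeasurableSpace α] (μ : Measure α) (u : α → EReal) : EReal :=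
  ((∫⁻ a, erealPos (u a) ∂μ : ENNReal) : EReal) - ((∫⁻ a, erealPos (-(u a)) ∂μ : ENNReal) : EReal)

/-- The normalized "angle" measure on `(0, 2π]`, used to express averages over circles. -/
def circleAngleMeasure : Measure ℝ :=
  (ENNReal.ofReal (2 * Real.pi))⁻¹ • volume.restrict (Set.Ioc 0 (2 * Real.pi))

/-- A function `u` with values in `[-∞, ∞)` is plurisubharmonic on an open set
`U ⊆ ℂⁿ` if it is upper semicontinuous on `U`, takes no value `+∞` on `U`, and
satisfies the sub-mean-value inequality on every closed disc of every complex line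
contained in `U`. -/
def PshOn {n : ℕ} (u : (Fin n → ℂ) → EReal) (U : Set (Fin n → ℂ)) : Prop :=
  UpperSemicontinuousOn u U ∧ (∀ z ∈ U, u z ≠ ⊤) ∧
  ∀ (a b : Fin n → ℂ) (r : ℝ), 0 < r →
    (∀ w : ℂ, ‖w‖ ≤ r → a + w • b ∈ U) →
    u a ≤ erealIntegral circleAngleMeasure
      (fun θ : ℝ => u (a + ((r : ℝ) * Complex.exp (θ * Complex.I)) • b))

/-- `u : ℂⁿ → ℝ` belongs to `PSH°(X)` (for `X` compact) if there is an open
neighborhood `U ⊇ X` and a continuous plurisubharmonic function `v` on `U`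
with `v = u` on `X`. -/
def PshO {n : ℕ} (u : (Fin n → ℂ) → ℝ) (X : Set (Fin n → ℂ)) : Prop :=
  ∃ U : Set (Fin n → ℂ), IsOpen U ∧ X ⊆ U ∧
    ∃ v : (Fin n → ℂ) → ℝ, ContinuousOn v U ∧ PshOn (fun z => (v z : EReal)) U ∧
      ∀ z ∈ X, u z = v z

/-- The Jensen measures at `z` with respect to the compact set `X`: Borel probability
measures supported in `X` such that `u z ≤ ∫ u dμ` for all `u ∈ PSH°(X)`. -/
def JensenMeasures {n : ℕ} (X : Set (Fin n → ℂ)) (z : Fin n → ℂ) :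
    Set (Measure (Fin n → ℂ)) :=
  {μ | IsProbabilityMeasure μ ∧ μ Xᶜ = 0 ∧
    ∀ u : (Fin n → ℂ) → ℝ, PshO u X → u z ≤ ∫ x, u x ∂μ}

/-- An upper semicontinuous function `u : X → [-∞, ∞)` is plurisubharmonic on the
compact set `X` if `u z ≤ ∫ u dμ` for every `z ∈ X` and every Jensen measure
`μ ∈ J_z(X)`. -/
def PshCompact {n : ℕ} (u : (Fin n → ℂ) → EReal) (X : Set (Fin n → ℂ)) : Prop :=
  UpperSemicontinuousOn u X ∧ (∀ z ∈ X, u z ≠ ⊤) ∧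
  ∀ z ∈ X, ∀ μ ∈ JensenMeasures X z, u z ≤ erealIntegral μ u

/-- A (bounded) domain: a bounded, connected, open subset of `ℂⁿ`. -/
def IsBoundedDomain {n : ℕ} (Ω : Set (Fin n → ℂ)) : Prop :=
  IsOpen Ω ∧ IsConnected Ω ∧ Bornology.IsBounded Ω

/-- The defining property of P-hyperconvexity: a non-constant function
`φ ∈ PSH(Ω̄) ∩ C(Ω̄)` vanishing on `∂Ω`. -/
def PHxExhaustion {n : ℕ} (Ω : Set (Fin n → ℂ)) : Prop :=
  ∃ φ : (Fin n → ℂ) → ℝ,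
    PshCompact (fun z => (φ z : EReal)) (closure Ω) ∧ ContinuousOn φ (closure Ω) ∧
    (∃ z ∈ closure Ω, ∃ w ∈ closure Ω, φ z ≠ φ w) ∧
    ∀ z ∈ frontier Ω, φ z = 0

/-- A bounded domain `Ω ⊂ ℂⁿ` is P-hyperconvex if there is a non-constant
`φ ∈ PSH(Ω̄) ∩ C(Ω̄)` with `φ = 0` on `∂Ω`. -/
def IsPHyperconvex {n : ℕ} (Ω : Set (Fin n → ℂ)) : Prop :=
  IsBoundedDomain Ω ∧ PHxExhaustion Ω

/-- A bounded domain `Ω ⊂ ℂⁿ` is hyperconvex if there is a non-constant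
`φ ∈ PSH(Ω) ∩ C(Ω̄)` with `φ = 0` on `∂Ω`. -/
def IsHyperconvex {n : ℕ} (Ω : Set (Fin n → ℂ)) : Prop :=
  IsBoundedDomain Ω ∧
  ∃ φ : (Fin n → ℂ) → ℝ,
    PshOn (fun z => (φ z : EReal)) Ω ∧ ContinuousOn φ (closure Ω) ∧
    (∃ z ∈ closure Ω, ∃ w ∈ closure Ω, φ z ≠ φ w) ∧
    ∀ z ∈ frontier Ω, φ z = 0

end

lemma measurable_erealPos : Measurable erealPos := by
  unfold erealPos
  refine Measurable.ite ?_ measurable_const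
    (ENNReal.measurable_ofReal.comp measurable_ereal_toReal)
  exact Set.setOf_eq_eq_singleton ▸ measurableSet_singleton (⊤ : EReal)

lemma erealPos_coe (x : ℝ) : erealPos (x : EReal) = ENNReal.ofReal x := by
  simp [erealPos]

lemma erealPos_neg_coe (x : ℝ) : erealPos (-(x : EReal)) = ENNReal.ofReal (-x) := by
  rw [← EReal.coe_neg, erealPos_coe]

instance circleAngleMeasure_prob : IsProbabilityMeasure circleAngleMeasure := by
  constructor
  rw [circleAngleMeasure]
  simp only [Measure.smul_apply, Measure.restrict_apply MeasurableSet.univ, Set.univ_inter,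
    Real.volume_Ioc, smul_eq_mul, sub_zero]
  rw [ENNReal.inv_mul_cancel]
  · simp [Real.pi_pos.le, Real.pi_pos]
  · exact ENNReal.ofReal_ne_top

lemma ereal_coe_ennreal_ne_top {A : ENNReal} (hA : A ≠ ⊤) :
    (A : EReal) = ((A.toReal : ℝ) : EReal) := by
  lift A to NNReal using hA
  rw [ENNReal.coe_toReal]
  rfl

lemma erealIntegral_coe {α : Type*} [MeasurableSpace α] (μ : Measure α) (g : α → ℝ)
    (hg : Integrable g μ) :
    erealIntegral μ (fun a => (g a : EReal)) = ((∫ a, g a ∂μ : ℝ) : EReal) := by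
  have hfin : ∀ h : α → ℝ, Integrable h μ → (∫⁻ a, ENNReal.ofReal (h a) ∂μ) ≠ ⊤ := by
    intro h hh
    have hle : (∫⁻ a, ENNReal.ofReal (h a) ∂μ) ≤ ∫⁻ a, (‖h a‖₊ : ENNReal) ∂μ := by
      refine lintegral_mono fun a => ?_
      rw [← enorm_eq_nnnorm, Real.enorm_eq_ofReal_abs]
      exact ENNReal.ofReal_le_ofReal (le_abs_self _)
    exact ne_top_of_le_ne_top hh.2.ne hle
  have h1 := hfin g hg
  have h2 := hfin (fun a => -g a) hg.neg
  rw [erealIntegral]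
  simp only [erealPos_coe, erealPos_neg_coe]
  rw [integral_eq_lintegral_pos_part_sub_lintegral_neg_part hg,
    ereal_coe_ennreal_ne_top h1, ereal_coe_ennreal_ne_top h2, ← EReal.coe_sub]

/-- A function plurisubharmonic on a compact set `X` is plurisubharmonic (in the
classical sense) on the interior of `X`. -/
theorem psh_compact_interior {n : ℕ} (X : Set (Fin n → ℂ)) (hX : IsCompact X)
    (hne : (interior X).Nonempty) (u : (Fin n → ℂ) → EReal)
    (hu : PshCompact u X) :
    PshOn u (interior X) := by
  classical
  obtain ⟨husc, htop, hjen⟩ := hu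
  refine ⟨husc.mono interior_subset, fun z hz => htop z (interior_subset hz), ?_⟩
  intro a b r hr hsub
  set f : ℝ → (Fin n → ℂ) := fun θ => a + ((r : ℂ) * Complex.exp (θ * Complex.I)) • b with hf
  have hfc : Continuous f := by fun_prop
  have hfm : Measurable f := hfc.measurable
  have hfX : ∀ θ, f θ ∈ interior X := by
    intro θ
    refine hsub _ ?_
    rw [norm_mul, Complex.norm_exp]
    simp [Complex.norm_of_nonneg hr.le, abs_of_pos hr]
  have haX : a ∈ X := by
    refine interior_subset (by simpa using hsub 0 (by simpa using hr.le))
  set ν := circleAngleMeasure with hν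
  set μ : Measure (Fin n → ℂ) := Measure.map f ν with hμ
  have hμX : μ Xᶜ = 0 := by
    rw [hμ, Measure.map_apply hfm hX.isClosed.measurableSet.compl]
    have : f ⁻¹' Xᶜ = ∅ := by
      ext θ; simp [interior_subset (hfX θ)]
    simp [this]
  -- μ is a Jensen measure at a
  have hJ : μ ∈ JensenMeasures X a := by
    refine ⟨Measure.isProbabilityMeasure_map hfm.aemeasurable, hμX, ?_⟩
    intro w hw
    obtain ⟨U, hUo, hXU, v, hvc, hvpsh, hvw⟩ := hw
    have hfU : ∀ θ, f θ ∈ U := fun θ => hXU (interior_subset (hfX θ))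
    have hgc : Continuous fun θ => v (f θ) := by
      rw [continuous_iff_continuousAt]
      intro θ
      exact (hvc.continuousAt (hUo.mem_nhds (hfU θ))).comp hfc.continuousAt
    have hgint : Integrable (fun θ => v (f θ)) ν := by
      rw [hν, circleAngleMeasure]
      refine (hgc.integrableOn_Ioc).smul_measure ?_
      exact ENNReal.inv_ne_top.2 (by positivity)
    have hkey := hvpsh.2.2 a b r hr fun w' hw' => hXU (interior_subset (hsub w' hw'))
    rw [erealIntegral_coe _ _ hgint] at hkey
    have hva : v a ≤ ∫ θ, v (f θ) ∂ν := EReal.coe_le_coe_iff.1 hkey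
    have hμU : μ Uᶜ = 0 := measure_mono_null (compl_subset_compl.2 hXU) hμX
    have hrestr : μ.restrict U = μ :=
      Measure.restrict_eq_self_of_ae_mem (mem_ae_iff.2 (by simpa using hμU))
    have hvasm : AEStronglyMeasurable v μ := by
      rw [← hrestr]
      exact hvc.aestronglyMeasurable hUo.measurableSet
    have h1 : ∫ x, w x ∂μ = ∫ x, v x ∂μ := by
      refine integral_congr_ae ?_
      filter_upwards [mem_ae_iff.2 (by simpa using hμX)] with x hx
      exact hvw x hx
    have h2 : ∫ x, v x ∂μ = ∫ θ, v (f θ) ∂ν := integral_map hfm.aemeasurable hvasm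
    rw [h1, h2, hvw a haX]
    exact hva
  have hmain := hjen a haX μ hJ
  -- transfer the integral over μ to the circle average
  set C : Set (Fin n → ℂ) := f '' Set.Icc 0 (2 * Real.pi) with hC
  have hCcpt : IsCompact C := isCompact_Icc.image hfc
  have hCX : C ⊆ X := by
    rintro - ⟨θ, -, rfl⟩
    exact interior_subset (hfX θ)
  have hμC : μ Cᶜ = 0 := by
    rw [hμ, Measure.map_apply hfm hCcpt.isClosed.measurableSet.compl, hν, circleAngleMeasure,
      Measure.smul_apply, Measure.restrict_apply (hfm hCcpt.isClosed.measurableSet.compl)]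
    have hemp : (f ⁻¹' C)ᶜ ∩ Set.Ioc 0 (2 * Real.pi) = ∅ := by
      ext θ
      simp only [Set.mem_inter_iff, Set.mem_preimage, Set.mem_compl_iff, Set.mem_empty_iff_false,
        iff_false, not_and]
      intro h1 h2
      exact h1 ⟨θ, Set.Ioc_subset_Icc_self h2, rfl⟩
    simp [hemp]
  set ut : (Fin n → ℂ) → EReal := fun x => if x ∈ C then u x else ⊥ with hut
  have hutusc : UpperSemicontinuous ut := by
    intro x c hc
    have hbot : (⊥ : EReal) < c := lt_of_le_of_lt bot_le hc
    by_cases hx : x ∈ C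
    · have hxX := hCX hx
      have h := husc x hxX c (by simpa [hut, hx] using hc)
      rw [eventually_nhdsWithin_iff] at h
      filter_upwards [h] with y hy
      by_cases hyC : y ∈ C
      · simpa [hut, hyC] using hy (hCX hyC)
      · simpa [hut, hyC] using hbot
    · filter_upwards [hCcpt.isClosed.isOpen_compl.mem_nhds hx] with y hy
      have hyC : y ∉ C := hy
      simpa [hut, hyC] using hbot
  have hume : AEMeasurable u μ := by
    refine ⟨ut, hutusc.measurable, ?_⟩
    filter_upwards [mem_ae_iff.2 (by simpa using hμC)] with x hx
    simp [hut, hx]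
  have hmap1 : (∫⁻ x, erealPos (u x) ∂μ) = ∫⁻ θ, erealPos (u (f θ)) ∂ν :=
    lintegral_map' (measurable_erealPos.comp_aemeasurable hume) hfm.aemeasurable
  have hmap2 : (∫⁻ x, erealPos (-u x) ∂μ) = ∫⁻ θ, erealPos (-u (f θ)) ∂ν :=
    lintegral_map'
      ((measurable_erealPos.comp (continuous_neg.measurable)).comp_aemeasurable hume)
      hfm.aemeasurable
  have heq : erealIntegral μ u =
      erealIntegral ν (fun θ : ℝ => u (a + ((r : ℝ) * Complex.exp (θ * Complex.I)) • b)) := by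
    rw [erealIntegral, erealIntegral, hmap1, hmap2]
  rw [heq] at hmain
  exact hmain
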